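/- Consequently, if M > E[M_c(z)] = ∫_{I_z} (2πD/(χα₊(z)))λ(z)dz, then the second moment of the expected density E[ρ] decreases at a uniform negative rate, so E[ρ] cannot remain a smooth nonnegative global solution; thus the critical mass for the expected density is M̄_c = E[M_c(z)]. -/

import Mathlib

open MeasureTheory

/-- The critical mass for the expected density is `M̄_c = E[M_c(z)]`: if
`M > E[M_c(z)]` and the second moment `I(t) ≥ 0` of the expected density decreases
at the uniform rate `I' ≤ −(χ/(2π)) M (M − E[M_c])` for all `t ≥ 0`, then `E[ρ]`
cannot remain a smooth nonnegative global solution. -/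
theorem stmt13 {Z : Type*} [MeasurableSpace Z] (μ : Measure Z) [IsProbabilityMeasure μ]
    (D χ M : ℝ) (hD : 0 < D) (hχ : 0 < χ)
    (α : Z → ℝ) (hα : ∀ z, 0 < α z)
    (Mc : Z → ℝ) (hMc : ∀ z, Mc z = 2 * Real.pi * D / (χ * α z))
    (hMcint : Integrable Mc μ)
    (hM : (∫ z, Mc z ∂μ) < M)
    (I : ℝ → ℝ) (hInonneg : ∀ t, 0 ≤ t → 0 ≤ I t)
    (d : ℝ → ℝ) (hd : ∀ t, 0 ≤ t → HasDerivAt I (d t) t)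
    (hdle : ∀ t, 0 ≤ t →
      d t ≤ -(χ / (2 * Real.pi)) * M * (M - ∫ z, Mc z ∂μ)) :
    False := by

  set c := ∫ z, Mc z ∂μ with hc
  have hc0 : 0 ≤ c := integral_nonneg fun z => by
    have := hα z
    have := Real.pi_pos
    rw [hMc z]
    positivity
  have hM0 : 0 < M := lt_of_le_of_lt hc0 hM
  set r : ℝ := -(χ / (2 * Real.pi)) * M * (M - c) with hr
  have hpi : 0 < Real.pi := Real.pi_pos
  have h2 : 0 < M - c := sub_pos.mpr hM
  have hr0 : r < 0 := by
    have h3 : 0 < χ / (2 * Real.pi) * M * (M - c) := by positivity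
    have := hr
    linarith
  have hrne : r ≠ 0 := ne_of_lt hr0
  set T : ℝ := (I 0 + 1) / (-r) with hT
  have hT0 : 0 < T := by
    have := hInonneg 0 le_rfl
    apply div_pos (by linarith) (by linarith)
  set g : ℝ → ℝ := fun t => I t - r * t with hg
  have hgd : ∀ t : ℝ, 0 ≤ t → HasDerivAt g (d t - r) t := by
    intro t ht
    have := (hd t ht).sub ((hasDerivAt_id t).const_mul r)
    simp only [mul_one] at this
    exact this
  have hanti : AntitoneOn g (Set.Icc 0 T) := by
    apply antitoneOn_of_deriv_nonpos (convex_Icc 0 T)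
    · exact fun t ht => ((hgd t ht.1).continuousAt).continuousWithinAt
    · intro t ht
      rw [interior_Icc] at ht
      exact (hgd t ht.1.le).differentiableAt.differentiableWithinAt
    · intro t ht
      rw [interior_Icc] at ht
      rw [(hgd t ht.1.le).deriv]
      have := hdle t ht.1.le
      linarith
  have hle : g T ≤ g 0 := hanti (Set.left_mem_Icc.mpr hT0.le)
    (Set.right_mem_Icc.mpr hT0.le) hT0.le
  have hIT : 0 ≤ I T := hInonneg T hT0.le
  have hrT : r * T = -(I 0 + 1) := by
    rw [hT]
    rw [mul_div_assoc', mul_comm, mul_div_assoc, div_neg, div_self hrne]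
    ring
  simp only [hg, mul_zero, sub_zero] at hle
  rw [hrT] at hle
  linarith
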